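/- Suppose F : ℝ → ℝ is nondecreasing with 0 ≤ F(x) ≤ F_∞ for all x ∈ ℝ. Let F_p = P_{Δx}F be the piecewise linear projection of F on the grid of mesh Δx > 0. Then F − F_p ∈ L²(ℝ) and ‖F − F_p‖_{L²(ℝ)} ≤ F_∞ · √Δx. -/

import Mathlib

open MeasureTheory Set
open scoped ENNReal NNReal

/-- Piecewise linear projection on the grid of mesh `dx`: the unique function equal to
`f (j * dx)` at every grid point `j * dx` (`j ∈ ℤ`) and affine on each cell
`[j * dx, (j+1) * dx]`. -/
noncomputable def plProj (dx : ℝ) (f : ℝ → ℝ) : ℝ → ℝ := fun x =>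
  f ((⌊x / dx⌋ : ℝ) * dx) +
    ((x - (⌊x / dx⌋ : ℝ) * dx) / dx) *
      (f (((⌊x / dx⌋ : ℝ) + 1) * dx) - f ((⌊x / dx⌋ : ℝ) * dx))

lemma cell_mem {dx : ℝ} (hdx : 0 < dx) (x : ℝ) (j : ℤ) :
    x ∈ Ico ((j : ℝ) * dx) (((j : ℝ) + 1) * dx) ↔ ⌊x / dx⌋ = j := by
  rw [Int.floor_eq_iff, mem_Ico, le_div_iff₀ hdx, div_lt_iff₀ hdx]

lemma pl_bound {F : ℝ → ℝ} (hF : Monotone F) {dx : ℝ} (hdx : 0 < dx) (x : ℝ) :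
    |F x - plProj dx F x| ≤ F (((⌊x / dx⌋ : ℝ) + 1) * dx) - F ((⌊x / dx⌋ : ℝ) * dx) := by
  have hax : (⌊x / dx⌋ : ℝ) * dx ≤ x := by
    have h := Int.floor_le (x / dx)
    have := div_mul_cancel₀ x hdx.ne'
    nlinarith
  have hxb : x ≤ ((⌊x / dx⌋ : ℝ) + 1) * dx := by
    have h := (Int.lt_floor_add_one (x / dx)).le
    have := div_mul_cancel₀ x hdx.ne'
    nlinarith
  have hFab : F ((⌊x / dx⌋ : ℝ) * dx) ≤ F (((⌊x / dx⌋ : ℝ) + 1) * dx) := hF (by nlinarith)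
  have ht0 : 0 ≤ (x - (⌊x / dx⌋ : ℝ) * dx) / dx := div_nonneg (by linarith) hdx.le
  have ht1 : (x - (⌊x / dx⌋ : ℝ) * dx) / dx ≤ 1 := by
    rw [div_le_one hdx]; nlinarith
  have hFx1 : F ((⌊x / dx⌋ : ℝ) * dx) ≤ F x := hF hax
  have hFx2 : F x ≤ F (((⌊x / dx⌋ : ℝ) + 1) * dx) := hF hxb
  have hkey : plProj dx F x =
      F ((⌊x / dx⌋ : ℝ) * dx) + ((x - (⌊x / dx⌋ : ℝ) * dx) / dx) *
        (F (((⌊x / dx⌋ : ℝ) + 1) * dx) - F ((⌊x / dx⌋ : ℝ) * dx)) := rfl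
  rw [abs_sub_le_iff, hkey]
  constructor <;> nlinarith

lemma telescope (G : ℤ → ℝ) (m : ℤ) :
    ∀ M, m ≤ M → ∑ j ∈ Finset.Icc m M, (G (j + 1) - G j) = G (M + 1) - G m := by
  refine Int.le_induction ?_ ?_
  · simp
  · intro M hM ih
    have hins : Finset.Icc m (M + 1) = insert (M + 1) (Finset.Icc m M) := by
      ext j; simp; omega
    rw [hins, Finset.sum_insert (by simp), ih]; ring

/-- Fourth projection estimate: `F - P_{Δx} F ∈ L²(ℝ)` and `‖F - P_{Δx} F‖_2 ≤ F_∞ √Δx`. -/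
theorem projection_estimate_F_L2
    (F : ℝ → ℝ) (Finf : ℝ) (hFinf : 0 < Finf)
    (hFmono : Monotone F)
    (hF0 : ∀ x, 0 ≤ F x) (hFle : ∀ x, F x ≤ Finf)
    (dx : ℝ) (hdx : 0 < dx) :
    MemLp (fun x => F x - plProj dx F x) 2 volume ∧
      eLpNorm (fun x => F x - plProj dx F x) 2 volume ≤
        ENNReal.ofReal (Finf * Real.sqrt dx) := by
  set g : ℝ → ℝ := fun x => F x - plProj dx F x with hgdef
  set h : ℝ → ℝ := fun x => F (((⌊x / dx⌋ : ℝ) + 1) * dx) - F ((⌊x / dx⌋ : ℝ) * dx) with hhdef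
  -- measurability
  have hFmeas : Measurable F := hFmono.measurable
  have hfl : Measurable fun x : ℝ => ((⌊x / dx⌋ : ℤ) : ℝ) :=
    measurable_from_top.comp (Int.measurable_floor.comp (measurable_id.div_const dx))
  have hPmeas : Measurable (plProj dx F) := by
    unfold plProj
    exact ((hFmeas.comp (hfl.mul_const dx)).add
      (((measurable_id.sub (hfl.mul_const dx)).div_const dx).mul
        ((hFmeas.comp ((hfl.add_const 1).mul_const dx)).sub (hFmeas.comp (hfl.mul_const dx)))))
  have hgmeas : Measurable g := hFmeas.sub hPmeas
  -- pointwise bounds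
  have hgb : ∀ x, |g x| ≤ h x := fun x => pl_bound hFmono hdx x
  have hhb : ∀ x, h x ≤ Finf := fun x => by
    have := hF0 ((⌊x / dx⌋ : ℝ) * dx); have := hFle (((⌊x / dx⌋ : ℝ) + 1) * dx)
    simp only [hhdef]; linarith
  have hh0 : ∀ x, 0 ≤ h x := fun x => le_trans (abs_nonneg _) (hgb x)
  -- key lintegral bound
  have hkey : (∫⁻ x, ENNReal.ofReal (h x)) ≤ ENNReal.ofReal (Finf * dx) := by
    set s : ℤ → Set ℝ := fun j => Ico ((j : ℝ) * dx) (((j : ℝ) + 1) * dx) with hsdef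
    have hsm : ∀ j, MeasurableSet (s j) := fun j => measurableSet_Ico
    have hdisj : Pairwise (Function.onFun Disjoint s) := by
      intro i j hij
      refine Set.disjoint_left.2 fun x hxi hxj => hij ?_
      exact (((cell_mem hdx x i).1 hxi).symm.trans ((cell_mem hdx x j).1 hxj))
    have hunion : (⋃ j, s j) = univ := by
      ext x; simp only [mem_iUnion, mem_univ, iff_true]
      exact ⟨⌊x / dx⌋, (cell_mem hdx x _).2 rfl⟩
    have hcell : ∀ j : ℤ, (∫⁻ x in s j, ENNReal.ofReal (h x)) =
        ENNReal.ofReal (F (((j : ℝ) + 1) * dx) - F ((j : ℝ) * dx)) * ENNReal.ofReal dx := by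
      intro j
      have hcong : ∀ᵐ x ∂volume, x ∈ s j →
          ENNReal.ofReal (h x) =
            ENNReal.ofReal (F (((j : ℝ) + 1) * dx) - F ((j : ℝ) * dx)) := by
        refine ae_of_all _ fun x hx => ?_
        have : ⌊x / dx⌋ = j := (cell_mem hdx x j).1 hx
        simp [hhdef, this]
      rw [setLIntegral_congr_fun_ae (hsm j) hcong, setLIntegral_const, hsdef,
        Real.volume_Ico]
      congr 1
      ring_nf
    have htsum : (∑' j : ℤ,
        ENNReal.ofReal (F (((j : ℝ) + 1) * dx) - F ((j : ℝ) * dx))) ≤ ENNReal.ofReal Finf := by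
      rw [ENNReal.tsum_eq_iSup_sum]
      refine iSup_le fun t => ?_
      rcases t.eq_empty_or_nonempty with rfl | ht
      · simp
      · set m := t.min' ht
        set M := t.max' ht
        have hsub : t ⊆ Finset.Icc m M := fun j hj =>
          Finset.mem_Icc.2 ⟨t.min'_le j hj, t.le_max' j hj⟩
        have hosc : ∀ j : ℤ, 0 ≤ F (((j : ℝ) + 1) * dx) - F ((j : ℝ) * dx) := fun j => by
          have : F ((j : ℝ) * dx) ≤ F (((j : ℝ) + 1) * dx) := hFmono (by nlinarith)
          linarith
        calc (∑ j ∈ t, ENNReal.ofReal (F (((j : ℝ) + 1) * dx) - F ((j : ℝ) * dx)))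
            ≤ ∑ j ∈ Finset.Icc m M,
                ENNReal.ofReal (F (((j : ℝ) + 1) * dx) - F ((j : ℝ) * dx)) :=
              Finset.sum_le_sum_of_subset hsub
          _ = ENNReal.ofReal (∑ j ∈ Finset.Icc m M,
                (F (((j : ℝ) + 1) * dx) - F ((j : ℝ) * dx))) :=
              (ENNReal.ofReal_sum_of_nonneg fun j _ => hosc j).symm
          _ ≤ ENNReal.ofReal Finf := by
              refine ENNReal.ofReal_le_ofReal ?_
              have hmM : m ≤ M := t.min'_le M (t.max'_mem ht)
              have := telescope (fun j => F ((j : ℝ) * dx)) m M hmM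
              rw [show (∑ j ∈ Finset.Icc m M, (F (((j : ℝ) + 1) * dx) - F ((j : ℝ) * dx)))
                  = ∑ j ∈ Finset.Icc m M, (F (((j + 1 : ℤ) : ℝ) * dx) - F ((j : ℝ) * dx)) by
                  refine Finset.sum_congr rfl fun j _ => ?_; push_cast; ring_nf]
              rw [this]
              have := hF0 ((m : ℝ) * dx)
              have := hFle (((M + 1 : ℤ) : ℝ) * dx)
              linarith
    calc (∫⁻ x, ENNReal.ofReal (h x))
        = ∫⁻ x in ⋃ j, s j, ENNReal.ofReal (h x) := by rw [hunion, Measure.restrict_univ]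
      _ = ∑' j : ℤ, ∫⁻ x in s j, ENNReal.ofReal (h x) := lintegral_iUnion hsm hdisj _
      _ = (∑' j : ℤ, ENNReal.ofReal (F (((j : ℝ) + 1) * dx) - F ((j : ℝ) * dx)))
            * ENNReal.ofReal dx := by
          simp_rw [hcell]; rw [ENNReal.tsum_mul_right]
      _ ≤ ENNReal.ofReal Finf * ENNReal.ofReal dx :=
          mul_le_mul_left htsum _
      _ = ENNReal.ofReal (Finf * dx) := (ENNReal.ofReal_mul hFinf.le).symm
  -- lintegral of |g|^2
  have hsq : ∀ x, ((‖g x‖₊ : ℝ≥0∞)) ^ (2 : ℝ) ≤ ENNReal.ofReal Finf * ENNReal.ofReal (h x) := by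
    intro x
    have h1 : ((‖g x‖₊ : ℝ≥0∞)) = ENNReal.ofReal |g x| := by
      rw [← Real.norm_eq_abs, ofReal_norm, enorm_eq_nnnorm]
    rw [h1, ENNReal.ofReal_rpow_of_nonneg (abs_nonneg _) (by norm_num),
      ← ENNReal.ofReal_mul hFinf.le]
    refine ENNReal.ofReal_le_ofReal ?_
    have h2 : |g x| ≤ Finf := le_trans (hgb x) (hhb x)
    have h3 : |g x| ^ (2 : ℝ) = |g x| * |g x| := by
      rw [show (2 : ℝ) = ((2 : ℕ) : ℝ) by norm_num, Real.rpow_natCast]; ring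
    rw [h3]
    exact mul_le_mul h2 (hgb x) (abs_nonneg _) hFinf.le
  have hM : (∫⁻ x, ((‖g x‖₊ : ℝ≥0∞)) ^ (2 : ℝ)) ≤ ENNReal.ofReal (Finf * (Finf * dx)) := by
    calc (∫⁻ x, ((‖g x‖₊ : ℝ≥0∞)) ^ (2 : ℝ))
        ≤ ∫⁻ x, ENNReal.ofReal Finf * ENNReal.ofReal (h x) := lintegral_mono hsq
      _ = ENNReal.ofReal Finf * ∫⁻ x, ENNReal.ofReal (h x) :=
          lintegral_const_mul' _ _ ENNReal.ofReal_ne_top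
      _ ≤ ENNReal.ofReal Finf * ENNReal.ofReal (Finf * dx) := mul_le_mul_right hkey _
      _ = ENNReal.ofReal (Finf * (Finf * dx)) := (ENNReal.ofReal_mul hFinf.le).symm
  have heq : eLpNorm g 2 volume =
      (∫⁻ x, ((‖g x‖₊ : ℝ≥0∞)) ^ (2 : ℝ)) ^ ((1 : ℝ) / 2) := by
    rw [eLpNorm_eq_lintegral_rpow_enorm_toReal two_ne_zero ENNReal.ofNat_ne_top]
    simp only [enorm_eq_nnnorm]
    norm_num
  have hfinal : eLpNorm g 2 volume ≤ ENNReal.ofReal (Finf * Real.sqrt dx) := by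
    rw [heq]
    calc (∫⁻ x, ((‖g x‖₊ : ℝ≥0∞)) ^ (2 : ℝ)) ^ ((1 : ℝ) / 2)
        ≤ (ENNReal.ofReal (Finf * (Finf * dx))) ^ ((1 : ℝ) / 2) :=
          ENNReal.rpow_le_rpow hM (by norm_num)
      _ = ENNReal.ofReal ((Finf * (Finf * dx)) ^ ((1 : ℝ) / 2)) :=
          ENNReal.ofReal_rpow_of_nonneg (by positivity) (by norm_num)
      _ = ENNReal.ofReal (Finf * Real.sqrt dx) := by
          congr 1
          rw [← Real.sqrt_eq_rpow, show Finf * (Finf * dx) = Finf ^ 2 * dx by ring,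
            Real.sqrt_mul (by positivity), Real.sqrt_sq hFinf.le]
  exact ⟨⟨hgmeas.aestronglyMeasurable, lt_of_le_of_lt hfinal ENNReal.ofReal_lt_top⟩, hfinal⟩
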